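/- For every u in the Schwartz space 𝒮(ℝⁿ), every x ∈ ℝⁿ and all 0 < s < t, the map s ↦ H_{t,s}u(x) is differentiable at s and its derivative satisfies ∂/∂s H_{t,s}u(x) = +(2π)^{−n/2} ∫_{ℝⁿ} e^{ix·ξ} q(s,ξ) exp(−∫_s^t q(τ,ξ)dτ) û(ξ) dξ, i.e. ∂/∂s H_{t,s} u = −H_{t,s}(−q(s,D)u) where q(s,D) is the pseudo-differential operator with symbol q(s,ξ). -/

import Mathlib

open MeasureTheory Real Filter intervalIntegral

/-- The Fourier transform with normalization `(2π)^(-n/2)`. -/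
noncomputable def fourierTransform {n : ℕ} (u : EuclideanSpace ℝ (Fin n) → ℂ)
    (ξ : EuclideanSpace ℝ (Fin n)) : ℂ :=
  (((2 * π) ^ (-(n : ℝ) / 2) : ℝ) : ℂ) *
    ∫ x, Complex.exp (-(Complex.I * ((inner ℝ x ξ : ℝ) : ℂ))) * u x

/-- The operator `H_{t,s}` with symbol `exp(-∫_s^t q(τ,ξ)dτ)`. -/
noncomputable def Hop {n : ℕ} (q : ℝ → EuclideanSpace ℝ (Fin n) → ℝ)
    (t s : ℝ) (u : EuclideanSpace ℝ (Fin n) → ℂ) (x : EuclideanSpace ℝ (Fin n)) : ℂ :=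
  (((2 * π) ^ (-(n : ℝ) / 2) : ℝ) : ℂ) *
    ∫ ξ, Complex.exp (Complex.I * ((inner ℝ x ξ : ℝ) : ℂ)) *
      Complex.exp (-(((∫ τ in s..t, q τ ξ) : ℝ) : ℂ)) * fourierTransform u ξ

noncomputable def scaleCLE (n : ℕ) :
    EuclideanSpace ℝ (Fin n) ≃L[ℝ] EuclideanSpace ℝ (Fin n) :=
  ⟨LinearEquiv.smulOfNeZero ℝ _ ((2 * π)⁻¹)
      (by positivity), continuous_const_smul _, continuous_const_smul _⟩

lemma scaleCLE_apply {n : ℕ} (ξ : EuclideanSpace ℝ (Fin n)) :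
    scaleCLE n ξ = (2 * π)⁻¹ • ξ := rfl

open FourierTransform in
lemma ft_eq {n : ℕ} (u : EuclideanSpace ℝ (Fin n) → ℂ) (ξ : EuclideanSpace ℝ (Fin n)) :
    fourierTransform u ξ =
      (((2 * π) ^ (-(n : ℝ) / 2) : ℝ) : ℂ) * 𝓕 u ((2 * π)⁻¹ • ξ) := by
  rw [Real.fourier_eq']
  unfold fourierTransform
  congr 1
  refine integral_congr_ae (Eventually.of_forall fun v => ?_)
  simp only [smul_eq_mul, real_inner_smul_right]
  congr 1
  have h2π : (2 * π) ≠ 0 := by positivity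
  have : -2 * π * ((2 * π)⁻¹ * (inner ℝ v ξ : ℝ)) = -(inner ℝ v ξ : ℝ) := by field_simp
  rw [this]
  push_cast
  ring

theorem stmt1 {n : ℕ} (hn : 1 ≤ n)
    (q : ℝ → EuclideanSpace ℝ (Fin n) → ℝ)
    (hq_cont : ContinuousOn (fun p : ℝ × EuclideanSpace ℝ (Fin n) => q p.1 p.2)
      (Set.Ici (0 : ℝ) ×ˢ Set.univ))
    (C : ℝ) (hC : 0 < C)
    (hq_bound : ∀ τ, 0 ≤ τ → ∀ ξ, 0 ≤ q τ ξ ∧ q τ ξ ≤ C * (1 + ‖ξ‖ ^ 2))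
    (u : SchwartzMap (EuclideanSpace ℝ (Fin n)) ℂ)
    (x : EuclideanSpace ℝ (Fin n)) (s t : ℝ) (hs : 0 < s) (hst : s < t) :
    HasDerivAt (fun s' => Hop q t s' (⇑u) x)
      ((((2 * π) ^ (-(n : ℝ) / 2) : ℝ) : ℂ) *
        ∫ ξ, Complex.exp (Complex.I * ((inner ℝ x ξ : ℝ) : ℂ)) * ((q s ξ : ℝ) : ℂ) *
          Complex.exp (-(((∫ τ in s..t, q τ ξ) : ℝ) : ℂ)) * fourierTransform (⇑u) ξ) s := by
  unfold Hop
  classical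
  have h2π : (0:ℝ) < 2 * π := by positivity
  set c₀ : ℝ := (2 * π) ^ (-(n : ℝ) / 2) with hc₀def
  have hc₀pos : 0 < c₀ := Real.rpow_pos_of_pos h2π _
  -- the scaled Fourier transform as a Schwartz map
  set h : SchwartzMap (EuclideanSpace ℝ (Fin n)) ℂ :=
    SchwartzMap.compCLMOfContinuousLinearEquiv ℂ (scaleCLE n)
      (SchwartzMap.fourierTransformCLM ℂ u) with hhdef
  have hft : ∀ ξ : EuclideanSpace ℝ (Fin n), fourierTransform (⇑u) ξ = (c₀ : ℂ) * h ξ := by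
    intro ξ
    have hξ : h ξ = FourierTransform.fourier (⇑u) ((2 * π)⁻¹ • ξ) := by
      simp [hhdef, scaleCLE_apply, SchwartzMap.fourier_coe]
    rw [ft_eq, hξ]
  have hftnorm : ∀ ξ : EuclideanSpace ℝ (Fin n), ‖fourierTransform (⇑u) ξ‖ = c₀ * ‖h ξ‖ := by
    intro ξ
    rw [hft ξ, norm_mul, Complex.norm_real, Real.norm_eq_abs, abs_of_pos hc₀pos]
  have hftcont : Continuous (fourierTransform (⇑u)) := by
    have : fourierTransform (⇑u) = fun ξ => (c₀ : ℂ) * h ξ := funext hft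
    rw [this]; exact continuous_const.mul h.continuous
  -- setup of neighborhood parameters
  set ε : ℝ := min s (t - s) / 2 with hεdef
  have hε : 0 < ε := by
    have := lt_min hs (by linarith : (0:ℝ) < t - s)
    positivity
  have hεs : ε < s := by
    have h1 : min s (t - s) ≤ s := min_le_left _ _
    have h2 : ε = min s (t - s) / 2 := hεdef
    linarith
  have hεt : s + ε < t := by
    have h1 : min s (t - s) ≤ t - s := min_le_right _ _
    have h2 : ε = min s (t - s) / 2 := hεdef
    linarith
  set δ : ℝ := s - ε with hδdef
  have hδ : 0 < δ := by simp only [hδdef]; linarith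
  have hball : ∀ s' ∈ Metric.ball s ε, δ < s' ∧ s' < t := by
    intro s' hs'
    rw [Metric.mem_ball, Real.dist_eq, abs_lt] at hs'
    have h2 : δ = s - ε := hδdef
    constructor
    · linarith [hs'.1]
    · linarith [hs'.2, hεt]
  -- the modified symbol, continuous on all of ℝ × EuclideanSpace ℝ (Fin n)
  set Q : ℝ → EuclideanSpace ℝ (Fin n) → ℝ := fun τ ξ => q (max τ δ) ξ with hQdef
  have hQc : Continuous (fun p : ℝ × EuclideanSpace ℝ (Fin n) => Q p.1 p.2) := by
    exact hq_cont.comp_continuous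
      ((continuous_fst.max continuous_const).prodMk continuous_snd)
      (fun p => ⟨le_trans hδ.le (le_max_right _ _), Set.mem_univ _⟩)
  have hQ0 : ∀ τ (ξ : EuclideanSpace ℝ (Fin n)), 0 ≤ Q τ ξ := by
    intro τ ξ
    exact (hq_bound (max τ δ) (le_trans hδ.le (le_max_right _ _)) ξ).1
  have hQle : ∀ τ (ξ : EuclideanSpace ℝ (Fin n)), Q τ ξ ≤ C * (1 + ‖ξ‖ ^ 2) := by
    intro τ ξ
    exact (hq_bound (max τ δ) (le_trans hδ.le (le_max_right _ _)) ξ).2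
  have hQeq : ∀ s' ∈ Metric.ball s ε, ∀ ξ : EuclideanSpace ℝ (Fin n),
      (∫ τ in s'..t, q τ ξ) = ∫ τ in s'..t, Q τ ξ := by
    intro s' hs' ξ
    apply intervalIntegral.integral_congr
    intro τ hτ
    rw [Set.uIcc_of_le (hball s' hs').2.le] at hτ
    simp only [hQdef]
    rw [max_eq_left (le_trans (hball s' hs').1.le hτ.1)]
  have hsball : s ∈ Metric.ball s ε := Metric.mem_ball_self hε
  -- the integrands
  set F : ℝ → EuclideanSpace ℝ (Fin n) → ℂ := fun s' ξ =>
    Complex.exp (Complex.I * ((inner ℝ x ξ : ℝ) : ℂ)) *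
      Complex.exp (-(((∫ τ in s'..t, Q τ ξ) : ℝ) : ℂ)) * fourierTransform (⇑u) ξ with hFdef
  set F' : ℝ → EuclideanSpace ℝ (Fin n) → ℂ := fun s' ξ =>
    Complex.exp (Complex.I * ((inner ℝ x ξ : ℝ) : ℂ)) * ((Q s' ξ : ℝ) : ℂ) *
      Complex.exp (-(((∫ τ in s'..t, Q τ ξ) : ℝ) : ℂ)) * fourierTransform (⇑u) ξ with hF'def
  set bound : EuclideanSpace ℝ (Fin n) → ℝ := fun ξ => C * (1 + ‖ξ‖ ^ 2) * ‖fourierTransform (⇑u) ξ‖ with hbdef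
  -- norm computations
  have hnormA : ∀ ξ : EuclideanSpace ℝ (Fin n), ‖Complex.exp (Complex.I * ((inner ℝ x ξ : ℝ) : ℂ))‖ = 1 := by
    intro ξ
    rw [Complex.norm_exp]
    simp
  have hnormE : ∀ (r : ℝ), ‖Complex.exp (-(r : ℂ))‖ = Real.exp (-r) := by
    intro r
    rw [Complex.norm_exp]
    simp
  have hrnonneg : ∀ s' ∈ Metric.ball s ε, ∀ ξ : EuclideanSpace ℝ (Fin n), 0 ≤ ∫ τ in s'..t, Q τ ξ := by
    intro s' hs' ξ
    exact intervalIntegral.integral_nonneg (hball s' hs').2.le (fun τ _ => hQ0 τ ξ)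
  -- continuity of the inner integral in ξ
  have hIcont : ∀ s' : ℝ, Continuous fun ξ : EuclideanSpace ℝ (Fin n) => ∫ τ in s'..t, Q τ ξ := by
    intro s'
    exact intervalIntegral.continuous_parametric_intervalIntegral_of_continuous'
      (f := fun (ξ : EuclideanSpace ℝ (Fin n)) (τ : ℝ) => Q τ ξ)
      (by exact hQc.comp (continuous_snd.prodMk continuous_fst)) s' t
  have hFcont : ∀ s' : ℝ, Continuous (F s') := by
    intro s'
    apply Continuous.mul ?_ hftcont
    apply Continuous.mul
    · exact Complex.continuous_exp.comp (continuous_const.mul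
        (Complex.continuous_ofReal.comp (continuous_const.inner continuous_id)))
    · exact Complex.continuous_exp.comp
        ((Complex.continuous_ofReal.comp (hIcont s')).neg)
  -- integrability facts
  have hInt1 : Integrable (fun ξ : EuclideanSpace ℝ (Fin n) => ‖h ξ‖) := h.integrable.norm
  have hInt2 : Integrable (fun ξ : EuclideanSpace ℝ (Fin n) => ‖ξ‖ ^ 2 * ‖h ξ‖) := h.integrable_pow_mul volume 2
  have hbound_int : Integrable bound := by
    have : Integrable (fun ξ : EuclideanSpace ℝ (Fin n) => (C * c₀) * (‖h ξ‖ + ‖ξ‖ ^ 2 * ‖h ξ‖)) :=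
      (hInt1.add hInt2).const_mul _
    apply this.congr
    filter_upwards with ξ
    rw [hbdef]
    simp only [hftnorm ξ]
    ring
  have hF_int : Integrable (F s) := by
    apply Integrable.mono (hInt1.const_mul c₀) (hFcont s).aestronglyMeasurable
    filter_upwards with ξ
    rw [hFdef]
    simp only [norm_mul, hnormA, hnormE, hftnorm, one_mul, norm_norm, abs_norm,
      Real.norm_eq_abs, abs_of_pos hc₀pos]
    have h1 : Real.exp (-(∫ τ in s..t, Q τ ξ)) ≤ 1 := by
      rw [Real.exp_le_one_iff]
      linarith [hrnonneg s hsball ξ]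
    have h2 : (0:ℝ) ≤ c₀ * ‖h ξ‖ := mul_nonneg hc₀pos.le (norm_nonneg _)
    nlinarith [mul_le_mul_of_nonneg_right h1 h2]
  -- the bound on F'
  have h_bound : ∀ᵐ ξ : EuclideanSpace ℝ (Fin n), ∀ s' ∈ Metric.ball s ε, ‖F' s' ξ‖ ≤ bound ξ := by
    filter_upwards with ξ
    intro s' hs'
    rw [hF'def, hbdef]
    simp only [norm_mul, hnormA, hnormE, one_mul]
    rw [Complex.norm_real, Real.norm_eq_abs, abs_of_nonneg (hQ0 s' ξ)]
    have h1 : Real.exp (-(∫ τ in s'..t, Q τ ξ)) ≤ 1 := by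
      rw [Real.exp_le_one_iff]
      linarith [hrnonneg s' hs' ξ]
    have h2 : Q s' ξ ≤ C * (1 + ‖ξ‖ ^ 2) := hQle s' ξ
    have h3 : (0:ℝ) ≤ Q s' ξ := hQ0 s' ξ
    have h4 : (0:ℝ) < Real.exp (-(∫ τ in s'..t, Q τ ξ)) := Real.exp_pos _
    have h5 : Q s' ξ * Real.exp (-(∫ τ in s'..t, Q τ ξ)) ≤ C * (1 + ‖ξ‖ ^ 2) := by
      nlinarith
    exact mul_le_mul_of_nonneg_right h5 (norm_nonneg _)
  -- differentiability
  have h_diff : ∀ᵐ ξ : EuclideanSpace ℝ (Fin n), ∀ s' ∈ Metric.ball s ε, HasDerivAt (F · ξ) (F' s' ξ) s' := by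
    filter_upwards with ξ
    intro s' hs'
    have hQcont1 : Continuous fun τ => Q τ ξ :=
      hQc.comp (continuous_id.prodMk continuous_const)
    have hr : HasDerivAt (fun s'' => ∫ τ in s''..t, Q τ ξ) (-(Q s' ξ)) s' :=
      intervalIntegral.integral_hasDerivAt_left
        (hQcont1.intervalIntegrable _ _)
        (hQcont1.stronglyMeasurableAtFilter _ _)
        hQcont1.continuousAt
    have hrC : HasDerivAt (fun s'' => -(((∫ τ in s''..t, Q τ ξ) : ℝ) : ℂ))
        ((Q s' ξ : ℝ) : ℂ) s' := by
      have := hr.ofReal_comp.neg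
      exact this.congr_deriv (by simp)
    have hE : HasDerivAt (fun s'' => Complex.exp (-(((∫ τ in s''..t, Q τ ξ) : ℝ) : ℂ)))
        (Complex.exp (-(((∫ τ in s'..t, Q τ ξ) : ℝ) : ℂ)) * ((Q s' ξ : ℝ) : ℂ)) s' :=
      hrC.cexp
    have := (hE.const_mul (Complex.exp (Complex.I * ((inner ℝ x ξ : ℝ) : ℂ)))).mul_const
      (fourierTransform (⇑u) ξ)
    refine this.congr_deriv ?_
    rw [hF'def]
    ring
  have key := hasDerivAt_integral_of_dominated_loc_of_deriv_le (Metric.ball_mem_nhds s hε)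
    (Eventually.of_forall fun s' => (hFcont s').aestronglyMeasurable)
    hF_int
    (F' := F')
    (by
      have : Continuous (F' s) := by
        apply Continuous.mul ?_ hftcont
        apply Continuous.mul
        apply Continuous.mul
        · exact Complex.continuous_exp.comp (continuous_const.mul
            (Complex.continuous_ofReal.comp (continuous_const.inner continuous_id)))
        · exact Complex.continuous_ofReal.comp
            (hQc.comp (continuous_const.prodMk continuous_id))
        · exact Complex.continuous_exp.comp
            ((Complex.continuous_ofReal.comp (hIcont s)).neg)
      exact this.aestronglyMeasurable)
    h_bound hbound_int h_diff
  have main : HasDerivAt (fun s' => (c₀ : ℂ) * ∫ ξ, F s' ξ)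
      ((c₀ : ℂ) * ∫ ξ, F' s ξ) s := key.2.const_mul _
  -- identify with the statement
  have heq1 : (∫ ξ, F' s ξ) =
      ∫ ξ : EuclideanSpace ℝ (Fin n), Complex.exp (Complex.I * ((inner ℝ x ξ : ℝ) : ℂ)) * ((q s ξ : ℝ) : ℂ) *
          Complex.exp (-(((∫ τ in s..t, q τ ξ) : ℝ) : ℂ)) * fourierTransform (⇑u) ξ := by
    apply MeasureTheory.integral_congr_ae
    filter_upwards with ξ
    rw [hF'def]
    simp only
    rw [hQeq s hsball ξ]
    congr 3
    simp only [hQdef]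
    rw [max_eq_left (by linarith : δ ≤ s)]
  rw [heq1] at main
  apply main.congr_of_eventuallyEq
  filter_upwards [Metric.ball_mem_nhds s hε] with s' hs'
  congr 1
  apply MeasureTheory.integral_congr_ae
  filter_upwards with ξ
  rw [hFdef]
  simp only
  rw [hQeq s' hs' ξ]
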